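/- Let N be an abelian group, H a monoid, (E,φ) a compatible pair. The set of crossed homomorphisms t* : H → N relative to (E,φ), modulo the equivalence t*₁ ∼ t*₂ iff t*₁(h) ∼^h t*₂(h) for all h, forms an abelian group under pointwise multiplication. -/
import Mathlib


/-- An admissible H-indexed equivalence relation E on N: for each h an equivalence
relation ∼^h on N such that ∼^1 is equality, left multiplication preserves ∼^h, and
n ∼^h n' implies n ∼^{h·y} n'. -/
structure IndexedEqv (H N : Type*) [Monoid H] [Monoid N] where
  r : H → N → N → Prop
  iseqv : ∀ h, Equivalence (r h)
  one_eq : ∀ {n n' : N}, r 1 n n' → n = n'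
  mul_left : ∀ (x : N) {h : H} {n n' : N}, r h n n' → r h (x * n) (x * n')
  mul_right : ∀ (y : H) {h : H} {n n' : N}, r h n n' → r (h * y) n n'

def IndexedEqv.setoid {H N : Type*} [Monoid H] [Monoid N] (E : IndexedEqv H N) (h : H) :
    Setoid N := ⟨E.r h, E.iseqv h⟩

/-- α : H × N → N is a compatible action for the admissible indexed equivalence relation E. -/
structure CompatibleAction {H N : Type*} [Monoid H] [Monoid N] (E : IndexedEqv H N)
    (α : H → N → N) : Prop where
  c1 : ∀ (h : H) (n n' x : N), E.r h n n' → E.r h (n * α h x) (n' * α h x)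
  c2 : ∀ (h : H) (n n' : N) (x : H), E.r h n n' → E.r (x * h) (α x n) (α x n')
  c3 : ∀ (h : H) (n n' : N), E.r h (α h (n * n')) (α h n * α h n')
  c4 : ∀ (h h' : H) (n : N), E.r (h * h') (α (h * h') n) (α h (α h' n))
  c5 : ∀ h : H, E.r h (α h 1) 1
  c6 : ∀ n : N, E.r 1 (α 1 n) n

/-- The carrier ⨆_{h ∈ H} N/∼^h of the weak semidirect product. -/
def WProd {H N : Type*} [Monoid H] [Monoid N] (E : IndexedEqv H N) : Type _ :=
  (h : H) × Quotient (E.setoid h)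

/-- The element ([n], h). -/
def wmk {H N : Type*} [Monoid H] [Monoid N] (E : IndexedEqv H N) (h : H) (n : N) : WProd E :=
  ⟨h, Quotient.mk (E.setoid h) n⟩

/-- The multiplication ([n],h)·([n'],h') = ([n·α(h,n')], h·h') of the weak semidirect
product N ⋊_{E,α} H. -/
def wmul {H N : Type*} [Monoid H] [Monoid N] (E : IndexedEqv H N) {α : H → N → N}
    (hα : CompatibleAction E α) : WProd E → WProd E → WProd E :=
  fun x y =>
    ⟨x.1 * y.1,
      Quotient.liftOn₂ x.2 y.2
        (fun n n' => Quotient.mk (E.setoid (x.1 * y.1)) (n * α x.1 n'))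
        (fun a c b d hab hcd =>
          Quotient.sound
            ((E.iseqv (x.1 * y.1)).trans
              (E.mul_right y.1 (hα.c1 x.1 a b c hab))
              (E.mul_left b (hα.c2 y.1 c d x.1 hcd))))⟩

/-- A factor set relative to the compatible pair (E, α), with abelian group kernel N:
g(h,1) ∼^h 1 ∼^h g(1,h) and g(x,y)·g(xy,z) ∼^{xyz} α(x, g(y,z))·g(x, yz). -/
def IsFactorSet {H N : Type*} [Monoid H] [CommGroup N] (E : IndexedEqv H N)
    (α : H → N → N) (g : H → H → N) : Prop :=
  (∀ h : H, E.r h (g h 1) 1) ∧ (∀ h : H, E.r h (g 1 h) 1) ∧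
  ∀ x y z : H, E.r (x * y * z) (g x y * g (x * y) z) (α x (g y z) * g x (y * z))

/-- The multiplication ([n],h)·([n'],h') = ([n·α(h,n')·g(h,h')], h·h') of
N ⋊_{E,α}^g H. -/
def wgmul {H N : Type*} [Monoid H] [CommGroup N] (E : IndexedEqv H N) {α : H → N → N}
    (g : H → H → N) (hα : CompatibleAction E α) : WProd E → WProd E → WProd E :=
  fun x y =>
    ⟨x.1 * y.1,
      Quotient.liftOn₂ x.2 y.2
        (fun n n' => Quotient.mk (E.setoid (x.1 * y.1)) (n * α x.1 n' * g x.1 y.1))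
        (by
          intro a c b d hab hcd
          apply Quotient.sound
          have h1 : E.r (x.1 * y.1) (a * α x.1 c) (b * α x.1 d) :=
            (E.iseqv _).trans (E.mul_right y.1 (hα.c1 x.1 a b c hab))
              (E.mul_left b (hα.c2 y.1 c d x.1 hcd))
          have h2 := E.mul_left (g x.1 y.1) h1
          show E.r (x.1 * y.1) (a * α x.1 c * g x.1 y.1) (b * α x.1 d * g x.1 y.1)
          simpa [mul_comm, mul_assoc, mul_left_comm] using h2)⟩

/-- A crossed homomorphism relative to (E,α): t(1) = 1 and
t(h·h') ∼^{h·h'} t(h)·α(h, t(h')). -/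
def IsCrossedHom {H N : Type*} [Monoid H] [CommGroup N] (E : IndexedEqv H N)
    (α : H → N → N) (t : H → N) : Prop :=
  t 1 = 1 ∧ ∀ h h' : H, E.r (h * h') (t (h * h')) (t h * α h (t h'))

/-- The type of crossed homomorphisms relative to (E,α). -/
def CrossedHoms {H N : Type*} [Monoid H] [CommGroup N] (E : IndexedEqv H N)
    (α : H → N → N) : Type _ := {t : H → N // IsCrossedHom E α t}

/-- Two crossed homomorphisms are equivalent iff t₁(h) ∼^h t₂(h) for all h. -/
def chEquiv {H N : Type*} [Monoid H] [CommGroup N] (E : IndexedEqv H N) (α : H → N → N) :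
    CrossedHoms E α → CrossedHoms E α → Prop :=
  fun t₁ t₂ => ∀ h : H, E.r h (t₁.1 h) (t₂.1 h)

section Aux

variable {H N : Type*} [Monoid H] [CommGroup N] (E : IndexedEqv H N) {α : H → N → N}

lemma IndexedEqv.rmul {h : H} {a b c d : N} (hab : E.r h a b) (hcd : E.r h c d) :
    E.r h (a * c) (b * d) := by
  have h1 : E.r h (a * c) (a * d) := E.mul_left a hcd
  have h2 : E.r h (d * a) (d * b) := E.mul_left d hab
  refine (E.iseqv h).trans h1 ?_
  simpa [mul_comm] using h2

lemma IndexedEqv.rinv {h : H} {a b : N} (hab : E.r h a b) : E.r h a⁻¹ b⁻¹ := by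
  have := E.mul_left (a⁻¹ * b⁻¹) ((E.iseqv h).symm hab)
  simpa [mul_comm, mul_assoc, mul_left_comm] using this

lemma crossed_mul_mem (hα : CompatibleAction E α) (t t' : CrossedHoms E α) :
    IsCrossedHom E α (fun h => t.1 h * t'.1 h) := by
  refine ⟨by simp [t.2.1, t'.2.1], fun h h' => ?_⟩
  have h1 := E.rmul (t.2.2 h h') (t'.2.2 h h')
  refine (E.iseqv _).trans h1 ?_
  have h2 : E.r h (α h (t.1 h') * α h (t'.1 h')) (α h (t.1 h' * t'.1 h')) :=
    (E.iseqv h).symm (hα.c3 h (t.1 h') (t'.1 h'))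
  have h3 := E.mul_left (t.1 h * t'.1 h) (E.mul_right h' h2)
  simpa [mul_comm, mul_assoc, mul_left_comm] using h3

lemma crossed_one_mem (hα : CompatibleAction E α) :
    IsCrossedHom E α (fun _ : H => (1 : N)) := by
  refine ⟨rfl, fun h h' => ?_⟩
  have := (E.iseqv _).symm (E.mul_right h' (hα.c5 h))
  simpa using this

lemma crossed_inv_mem (hα : CompatibleAction E α) (t : CrossedHoms E α) :
    IsCrossedHom E α (fun h => (t.1 h)⁻¹) := by
  refine ⟨by simp [t.2.1], fun h h' => ?_⟩
  have h1 := E.rinv (t.2.2 h h')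
  have h2 : E.r h (α h (t.1 h' * (t.1 h')⁻¹)) (α h (t.1 h') * α h ((t.1 h')⁻¹)) :=
    hα.c3 h (t.1 h') ((t.1 h')⁻¹)
  have h3 : E.r h (α h (t.1 h') * α h ((t.1 h')⁻¹)) 1 := by
    refine (E.iseqv h).trans ((E.iseqv h).symm h2) ?_
    simpa using hα.c5 h
  -- hence α h ((t.1 h')⁻¹) ∼^h (α h (t.1 h'))⁻¹
  have h4 : E.r h (α h ((t.1 h')⁻¹)) (α h (t.1 h'))⁻¹ := by
    have := E.mul_left (α h (t.1 h'))⁻¹ h3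
    simpa [mul_comm, mul_assoc, mul_left_comm] using this
  refine (E.iseqv _).trans h1 ?_
  show E.r (h * h') (t.1 h * α h (t.1 h'))⁻¹ ((t.1 h)⁻¹ * α h ((t.1 h')⁻¹))
  rw [mul_inv]
  exact E.mul_left (t.1 h)⁻¹ (E.mul_right h' ((E.iseqv h).symm h4))

lemma chEquiv_equivalence : Equivalence (chEquiv E α) := by
  constructor
  · intro t h; exact (E.iseqv h).refl _
  · intro t t' h1 h; exact (E.iseqv h).symm (h1 h)
  · intro a b c h1 h2 h; exact (E.iseqv h).trans (h1 h) (h2 h)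

end Aux

/-- The crossed homomorphisms relative to (E,α), modulo the equivalence
t₁ ∼ t₂ iff t₁(h) ∼^h t₂(h) for all h, form an abelian group under pointwise
multiplication (the group Z¹(H,N,E,[α])). -/
theorem crossed_homs_comm_group {H N : Type*} [Monoid H] [CommGroup N] (E : IndexedEqv H N)
    (α : H → N → N) (hα : CompatibleAction E α) :
    Equivalence (chEquiv E α) ∧
    -- crossed homomorphisms are closed under pointwise multiplication
    (∀ t t' : CrossedHoms E α, IsCrossedHom E α (fun h => t.1 h * t'.1 h)) ∧
    -- the quotient is an abelian group under pointwise multiplication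
    ∃ G : CommGroup (Quot (chEquiv E α)),
      ∀ (t t' : CrossedHoms E α) (hp : IsCrossedHom E α (fun h => t.1 h * t'.1 h)),
        G.mul (Quot.mk _ t) (Quot.mk _ t') = Quot.mk _ ⟨fun h => t.1 h * t'.1 h, hp⟩ := by
  refine ⟨chEquiv_equivalence E, crossed_mul_mem E hα, ?_⟩
  set pm : CrossedHoms E α → CrossedHoms E α → CrossedHoms E α :=
    fun t t' => ⟨fun h => t.1 h * t'.1 h, crossed_mul_mem E hα t t'⟩ with hpm
  set pinv : CrossedHoms E α → CrossedHoms E α :=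
    fun t => ⟨fun h => (t.1 h)⁻¹, crossed_inv_mem E hα t⟩ with hpinv
  have hmul_wd : ∀ a b c d, chEquiv E α a c → chEquiv E α b d →
      Quot.mk (chEquiv E α) (pm a b) = Quot.mk (chEquiv E α) (pm c d) := by
    intro a b c d hac hbd
    exact Quot.sound (fun h => E.rmul (hac h) (hbd h))
  set m : Quot (chEquiv E α) → Quot (chEquiv E α) → Quot (chEquiv E α) :=
    fun x y =>
      Quot.lift
        (fun a => Quot.lift (fun b => Quot.mk (chEquiv E α) (pm a b))
          (fun b d hbd => hmul_wd a b a d ((chEquiv_equivalence E).refl a) hbd))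
        (fun a c hac => by
          funext x
          induction x using Quot.ind with
          | _ b => exact hmul_wd a b c b hac ((chEquiv_equivalence E).refl b)) x y
    with hm
  set i : Quot (chEquiv E α) → Quot (chEquiv E α) :=
    Quot.map pinv (fun a c hac h => E.rinv (hac h)) with hi
  set o : Quot (chEquiv E α) := Quot.mk _ ⟨fun _ => 1, crossed_one_mem E hα⟩ with ho
  have hmmk : ∀ a b, m (Quot.mk _ a) (Quot.mk _ b) = Quot.mk _ (pm a b) := fun _ _ => rfl
  refine ⟨{ mul := m, one := o, inv := i,
            mul_assoc := ?_, one_mul := ?_, mul_one := ?_,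
            inv_mul_cancel := ?_, mul_comm := ?_ }, ?_⟩
  · refine Quot.ind (fun a => ?_); refine Quot.ind (fun b => ?_); refine Quot.ind (fun c => ?_)
    exact congrArg (Quot.mk _) (Subtype.ext (funext fun h => mul_assoc _ _ _))
  · refine Quot.ind (fun a => ?_)
    exact congrArg (Quot.mk _) (Subtype.ext (funext fun h => one_mul _))
  · refine Quot.ind (fun a => ?_)
    exact congrArg (Quot.mk _) (Subtype.ext (funext fun h => mul_one _))
  · refine Quot.ind (fun a => ?_)
    exact congrArg (Quot.mk _) (Subtype.ext (funext fun h => inv_mul_cancel _))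
  · refine Quot.ind (fun a => ?_); refine Quot.ind (fun b => ?_)
    exact congrArg (Quot.mk _) (Subtype.ext (funext fun h => mul_comm _ _))
  · intro t t' hp
    rfl
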